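/- Let α, β ∈ IPF(ℕ^n) with dom α = ↑x, ran α = ↑y, dom β = ↑u, ran β = ↑v, and let σ_α, σ_β be the associated coordinate permutations. Then dom(αβ) = ↑[(max{y,u} − y)σ_α⁻¹ + x], ran(αβ) = ↑[(max{y,u} − u)σ_β + v], and σ_{αβ} = σ_α σ_β, where max is taken componentwise. -/

import Mathlib

/-- An element of IPF(ℕ^n): a partial bijection of ℕ^n whose source and target are
principal filters and which is an order isomorphism between them. -/
def IsIPF {n : ℕ} (e : PartialEquiv (Fin n → ℕ+) (Fin n → ℕ+)) : Prop :=
  (∃ x, e.source = Set.Ici x) ∧ (∃ y, e.target = Set.Ici y) ∧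
    ∀ a ∈ e.source, ∀ b ∈ e.source, a ≤ b ↔ e a ≤ e b

/-- The right action of a permutation σ on tuples: (z)σ = (z_{σ⁻¹(1)},...,z_{σ⁻¹(n)}). -/
def permAct {n : ℕ} (σ : Equiv.Perm (Fin n)) (z : Fin n → ℕ+) : Fin n → ℕ+ :=
  fun j => z (σ.symm j)

/-- The composite ρσλ of Lemma 2.14 (decomposition of an element of IPF(ℕ^n) with
dom = ↑x, ran = ↑y and coordinate permutation σ). -/
def ipfMap {n : ℕ} (x y : Fin n → ℕ+) (σ : Equiv.Perm (Fin n))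
    (z : Fin n → ℕ+) : Fin n → ℕ+ :=
  fun j => z (σ.symm j) + 1 - x (σ.symm j) + y j - 1

lemma coe_sub' (a b : ℕ+) (h : (b:ℕ) < a) : ((a - b : ℕ+) : ℕ) = (a:ℕ) - b := by
  rw [PNat.sub_coe, if_pos (by exact_mod_cast h)]

lemma coe_sup' (a b : ℕ+) : ((a ⊔ b : ℕ+) : ℕ) = max (a:ℕ) (b:ℕ) := by
  rcases le_total a b with h | h <;>
    simp [max_eq_right h, max_eq_left h, max_eq_right ((PNat.coe_le_coe _ _).2 h),
      max_eq_left ((PNat.coe_le_coe _ _).2 h)]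

lemma ipfMap_coe {n : ℕ} (x y z : Fin n → ℕ+) (σ : Equiv.Perm (Fin n)) (j : Fin n)
    (h : (x (σ.symm j) : ℕ) ≤ z (σ.symm j)) :
    ((ipfMap x y σ z j : ℕ)) = (z (σ.symm j) : ℕ) + 1 - x (σ.symm j) + y j - 1 := by
  show ((z (σ.symm j) + 1 - x (σ.symm j) + y j - 1 : ℕ+) : ℕ) = _
  have h1 : (x (σ.symm j) : ℕ) < ((z (σ.symm j) + 1 : ℕ+) : ℕ) := by push_cast; omega
  have h2 : ((1 : ℕ+) : ℕ) < ((z (σ.symm j) + 1 - x (σ.symm j) + y j : ℕ+) : ℕ) := by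
    have ha := (z (σ.symm j) + 1 - x (σ.symm j)).pos
    have hb := (y j).pos
    push_cast
    omega
  rw [coe_sub' _ _ h2, PNat.add_coe, coe_sub' _ _ h1]
  push_cast
  omega


/-- For α, β ∈ IPF(ℕ^n) with dom α = ↑x, ran α = ↑y, dom β = ↑u,
ran β = ↑v and coordinate permutations σ_α, σ_β:
dom(αβ) = ↑[(max{y,u} − y)σ_α⁻¹ + x], ran(αβ) = ↑[(max{y,u} − u)σ_β + v] and
σ_{αβ} = σ_α σ_β.  (The generators are written as `permAct σ (y ⊔ u) + w - permAct σ y`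
etc. so that the PNat subtraction is exact; `αβ = e.trans f` is "α then β", and the
paper's composite permutation "σ_α then σ_β" is `σb * σa` in Mathlib's convention.) -/
theorem stmt12 (n : ℕ) (e f : PartialEquiv (Fin n → ℕ+) (Fin n → ℕ+))
    (he : IsIPF e) (hf : IsIPF f)
    (x y u v : Fin n → ℕ+) (σa σb : Equiv.Perm (Fin n))
    (hex : e.source = Set.Ici x) (hey : e.target = Set.Ici y)
    (hfu : f.source = Set.Ici u) (hfv : f.target = Set.Ici v)
    (hef : ∀ z ∈ e.source, e z = ipfMap x y σa z)
    (hff : ∀ z ∈ f.source, f z = ipfMap u v σb z) :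
    (e.trans f).source = Set.Ici (permAct σa⁻¹ (y ⊔ u) + x - permAct σa⁻¹ y) ∧
    (e.trans f).target = Set.Ici (permAct σb (y ⊔ u) + v - permAct σb u) ∧
    ∀ z ∈ (e.trans f).source, (e.trans f) z =
      ipfMap (permAct σa⁻¹ (y ⊔ u) + x - permAct σa⁻¹ y)
        (permAct σb (y ⊔ u) + v - permAct σb u) (σb * σa) z := by
  obtain ⟨-, -, hmono⟩ := hf
  set A := permAct σa⁻¹ (y ⊔ u) + x - permAct σa⁻¹ y with hAdef
  set B := permAct σb (y ⊔ u) + v - permAct σb u with hBdef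
  have hM : ∀ k, ((y ⊔ u) k : ℕ) = max (y k : ℕ) (u k : ℕ) := by
    intro k; rw [Pi.sup_apply, coe_sup']
  -- coordinate formulas for A and B
  have hA : ∀ i, (A i : ℕ) = max (y (σa i) : ℕ) (u (σa i)) + x i - y (σa i) := by
    intro i
    have h0 : A i = (y ⊔ u) (σa i) + x i - y (σa i) := rfl
    rw [h0, coe_sub' _ _ (by rw [PNat.add_coe, hM]; have := (x i).pos; omega),
      PNat.add_coe, hM]
  have hB : ∀ j, (B j : ℕ) = max (y (σb.symm j) : ℕ) (u (σb.symm j)) + v j - u (σb.symm j) := by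
    intro j
    have h0 : B j = (y ⊔ u) (σb.symm j) + v j - u (σb.symm j) := rfl
    rw [h0, coe_sub' _ _ (by rw [PNat.add_coe, hM]; have := (v j).pos; omega),
      PNat.add_coe, hM]
  -- source characterization
  have hsrc : (e.trans f).source = Set.Ici A := by
    rw [PartialEquiv.trans_source, hex, hfu]
    ext z
    simp only [Set.mem_inter_iff, Set.mem_Ici, Set.mem_preimage]
    constructor
    · rintro ⟨hzx, hzu⟩
      have hez := hef z (by rw [hex]; exact hzx)
      intro i
      rw [← PNat.coe_le_coe, hA i]
      have h1 : (u (σa i) : ℕ) ≤ (e z) (σa i) := (PNat.coe_le_coe _ _).2 (hzu (σa i))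
      rw [hez, ipfMap_coe x y z σa (σa i)
        ((PNat.coe_le_coe _ _).2 (hzx (σa.symm (σa i))))] at h1
      simp only [Equiv.symm_apply_apply] at h1
      have hx := (PNat.coe_le_coe _ _).2 (hzx i)
      have := (y (σa i)).pos
      omega
    · intro hzA
      have hAi : ∀ i, (A i : ℕ) ≤ z i := fun i => (PNat.coe_le_coe _ _).2 (hzA i)
      have hzx : x ≤ z := by
        intro i
        rw [← PNat.coe_le_coe]
        have h1 := hAi i
        rw [hA i] at h1
        have := (y (σa i)).pos
        omega
      refine ⟨hzx, ?_⟩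
      have hez := hef z (by rw [hex]; exact hzx)
      intro j
      rw [← PNat.coe_le_coe, hez, ipfMap_coe x y z σa j ((PNat.coe_le_coe _ _).2 (hzx _))]
      have hAj := hAi (σa.symm j)
      rw [hA (σa.symm j)] at hAj
      simp only [Equiv.apply_symm_apply] at hAj
      have hx := (PNat.coe_le_coe _ _).2 (hzx (σa.symm j))
      have := (y j).pos
      omega
  have hsup_mem : y ⊔ u ∈ f.source := by rw [hfu]; exact fun i => le_sup_right
  have hMu : ∀ k, (u k : ℕ) ≤ ((y ⊔ u) k : ℕ) := by intro k; rw [hM]; omega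
  have hfsup : f (y ⊔ u) = B := by
    rw [hff _ hsup_mem]
    funext j
    apply PNat.coe_injective
    rw [ipfMap_coe u v _ σb j (hMu _), hB j, hM]
    have := (v j).pos
    have := (u (σb.symm j)).pos
    omega
  refine ⟨hsrc, ?_, ?_⟩
  · -- target
    rw [PartialEquiv.trans_target, hfv, hey]
    ext w
    simp only [Set.mem_inter_iff, Set.mem_Ici, Set.mem_preimage]
    constructor
    · rintro ⟨hwv, hwy⟩
      have hwt : w ∈ f.target := by rw [hfv]; exact hwv
      have hws : f.symm w ∈ f.source := f.map_target hwt
      have hwu : u ≤ f.symm w := by rw [hfu] at hws; exact hws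
      have hMle : y ⊔ u ≤ f.symm w := sup_le hwy hwu
      have := (hmono _ hsup_mem _ hws).1 hMle
      rwa [hfsup, f.right_inv hwt] at this
    · intro hwB
      have hwv : v ≤ w := by
        intro j
        rw [← PNat.coe_le_coe]
        have h1 := (PNat.coe_le_coe _ _).2 (hwB j)
        rw [hB j] at h1
        have := (u (σb.symm j)).pos
        omega
      have hwt : w ∈ f.target := by rw [hfv]; exact hwv
      have hws : f.symm w ∈ f.source := f.map_target hwt
      refine ⟨hwv, ?_⟩
      have hfM : f (y ⊔ u) ≤ f (f.symm w) := by
        rw [hfsup, f.right_inv hwt]; exact hwB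
      have := (hmono _ hsup_mem _ hws).2 hfM
      exact le_trans le_sup_left this
  · -- the formula
    intro z hz
    have hzA : A ≤ z := by rw [hsrc] at hz; exact hz
    rw [PartialEquiv.trans_source, hex, hfu] at hz
    obtain ⟨hzx, hzu⟩ := hz
    simp only [Set.mem_Ici, Set.mem_preimage] at hzx hzu
    have hez := hef z (by rw [hex]; exact hzx)
    have htr : (e.trans f) z = f (e z) := rfl
    rw [htr, hff _ (by rw [hfu]; exact hzu)]
    funext j
    apply PNat.coe_injective
    have key : ∀ k, (u k : ℕ) ≤ ((e z) k : ℕ) := fun k => (PNat.coe_le_coe _ _).2 (hzu k)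
    rw [ipfMap_coe u v _ σb j (key _)]
    have hezc : ((e z) (σb.symm j) : ℕ) =
        (z (σa.symm (σb.symm j)) : ℕ) + 1 - x (σa.symm (σb.symm j)) + y (σb.symm j) - 1 := by
      rw [hez]; exact ipfMap_coe x y z σa (σb.symm j) ((PNat.coe_le_coe _ _).2 (hzx _))
    have hsymm : ((σb * σa).symm j) = σa.symm (σb.symm j) := rfl
    rw [ipfMap_coe A B z (σb * σa) j (by
      rw [hsymm]; exact (PNat.coe_le_coe _ _).2 (hzA _))]
    rw [hsymm]
    have hA' := hA (σa.symm (σb.symm j))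
    simp only [Equiv.apply_symm_apply] at hA'
    rw [hA', hB j]
    have hzA' := (PNat.coe_le_coe _ _).2 (hzA (σa.symm (σb.symm j)))
    rw [hA'] at hzA'
    have hk := key (σb.symm j)
    rw [hezc] at hk
    have hx := (PNat.coe_le_coe _ _).2 (hzx (σa.symm (σb.symm j)))
    have := (y (σb.symm j)).pos
    have := (u (σb.symm j)).pos
    have := (v j).pos
    rw [hezc]
    omega
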